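/- Derivability of generalized joint responsibility: for any n ≥ 0, pairwise disjoint coalitions D₁,…,Dₙ, reals t₁,…,tₙ ≥ 0, and formulas χ₁,…,χₙ, the hypotheses ̄N B^{t₁}_{D₁}χ₁, …, ̄N B^{tₙ}_{Dₙ}χₙ and χ₁ ∨ … ∨ χₙ derive B^{t₁+…+tₙ}_{D₁∪…∪Dₙ}(χ₁ ∨ … ∨ χₙ) in the proof system. -/

import Mathlib

/-- Formulas of the logic of blameworthiness with sacrifice over agent type `A`:
propositional variables, negation, implication, the universal modality `N`,
and the blameworthiness modality `B s C φ` ("coalition `C` is blameable for `φ`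
with degree (sacrifice) `s`"). -/
inductive Formula (A : Type) : Type where
  | var : ℕ → Formula A
  | neg : Formula A → Formula A
  | impl : Formula A → Formula A → Formula A
  | N : Formula A → Formula A
  | B : ℝ → Finset A → Formula A → Formula A

namespace Formula

/-- Disjunction, defined as usual. -/
def or {A : Type} (φ ψ : Formula A) : Formula A := (φ.neg).impl ψ

/-- Conjunction, defined as usual. -/
def and {A : Type} (φ ψ : Formula A) : Formula A := (φ.impl ψ.neg).neg

/-- The modality `N̄ φ := ¬ N ¬ φ` ("φ holds at some play"). -/
def nbar {A : Type} (φ : Formula A) : Formula A := (Formula.N φ.neg).neg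

/-- A contradictory formula (used as the empty disjunction). -/
def fbot {A : Type} : Formula A := ((Formula.var 0).impl (Formula.var 0)).neg

end Formula

/-- Finite disjunction `χ₁ ∨ ⋯ ∨ χₙ` of a list of formulas. -/
def bigOr {A : Type} : List (Formula A) → Formula A
  | [] => Formula.fbot
  | φ :: l => l.foldl Formula.or φ

/-- A game `(Δ, ‖·‖, d₀, Ω, P, π)`: a nonempty set of actions `Δ` with
nonnegative costs and a zero-cost action `d₀`, a set of outcomes `Ω`,
a set of plays `P` (pairs of a complete action profile and an outcome),
and a valuation `π` of propositional variables by sets of plays. -/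
structure Game (A : Type) where
  Δ : Type
  Ω : Type
  cost : Δ → ℝ
  cost_nonneg : ∀ d : Δ, 0 ≤ cost d
  d0 : Δ
  cost_d0 : cost d0 = 0
  P : Set ((A → Δ) × Ω)
  π : ℕ → Set ((A → Δ) × Ω)

/-- Satisfaction relation `(δ,ω) ⊨ φ`.  In particular
`(δ,ω) ⊨ B s C φ` iff `(δ,ω) ⊨ φ` and there is an action profile `γ` of the
coalition `C` of total cost `∑ a ∈ C, ‖γ(a)‖ ≤ s` such that every play
agreeing with `γ` on `C` falsifies `φ`. -/
def Sat {A : Type} (G : Game A) : ((A → G.Δ) × G.Ω) → Formula A → Prop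
  | p, .var n => p ∈ G.π n
  | p, .neg φ => ¬ Sat G p φ
  | p, .impl φ ψ => Sat G p φ → Sat G p ψ
  | _, .N φ => ∀ q ∈ G.P, Sat G q φ
  | p, .B s C φ => Sat G p φ ∧ ∃ γ : A → G.Δ,
      (∑ a ∈ C, G.cost (γ a)) ≤ s ∧
      ∀ q ∈ G.P, (∀ a ∈ C, q.1 a = γ a) → ¬ Sat G q φ

/-- A formula is a propositional tautology if it evaluates to true under every
Boolean valuation of formulas that respects negation and implication. -/
def Tautology {A : Type} (φ : Formula A) : Prop :=
  ∀ v : Formula A → Bool,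
    (∀ ψ : Formula A, v ψ.neg = !(v ψ)) →
    (∀ ψ χ : Formula A, v (ψ.impl χ) = (!(v ψ) || v χ)) →
    v φ = true

/-- Theorems of the logic of blameworthiness with sacrifice: propositional
tautologies, the Truth, Distributivity, Negative Introspection, None to Blame,
Monotonicity, Joint Responsibility, Blame for Cause, and Fairness axioms,
closed under Modus Ponens and Necessitation. -/
inductive Prov {A : Type} [DecidableEq A] : Formula A → Prop
  | taut {φ : Formula A} : Tautology φ → Prov φ
  | truthN {φ : Formula A} : Prov ((Formula.N φ).impl φ)
  | truthB {s : ℝ} {C : Finset A} {φ : Formula A} (hs : 0 ≤ s) :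
      Prov ((Formula.B s C φ).impl φ)
  | distr {φ ψ : Formula A} :
      Prov ((Formula.N (φ.impl ψ)).impl ((Formula.N φ).impl (Formula.N ψ)))
  | negIntro {φ : Formula A} :
      Prov (((Formula.N φ).neg).impl (Formula.N ((Formula.N φ).neg)))
  | noneToBlame {s : ℝ} {φ : Formula A} (hs : 0 ≤ s) :
      Prov ((Formula.B s (∅ : Finset A) φ).neg)
  | mono {s t : ℝ} {C D : Finset A} {φ : Formula A}
      (hs : 0 ≤ s) (hst : s ≤ t) (hCD : C ⊆ D) :
      Prov ((Formula.B s C φ).impl (Formula.B t D φ))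
  | joint {s t : ℝ} {C D : Finset A} {φ ψ : Formula A}
      (hs : 0 ≤ s) (ht : 0 ≤ t) (hCD : Disjoint C D) :
      Prov (((Formula.B s C φ).nbar.and (Formula.B t D ψ).nbar).impl
        ((φ.or ψ).impl (Formula.B (s + t) (C ∪ D) (φ.or ψ))))
  | cause {s : ℝ} {C : Finset A} {φ ψ : Formula A} (hs : 0 ≤ s) :
      Prov ((Formula.N (φ.impl ψ)).impl
        ((Formula.B s C ψ).impl (φ.impl (Formula.B s C φ))))
  | fair {s : ℝ} {C : Finset A} {φ : Formula A} (hs : 0 ≤ s) :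
      Prov ((Formula.B s C φ).impl (Formula.N (φ.impl (Formula.B s C φ))))
  | mp {φ ψ : Formula A} : Prov (φ.impl ψ) → Prov φ → Prov ψ
  | nec {φ : Formula A} : Prov φ → Prov (Formula.N φ)

/-- Derivability `X ⊢ φ` from a set of hypotheses: hypotheses and theorems of
the logic, closed under Modus Ponens. -/
inductive Derives {A : Type} [DecidableEq A] (X : Set (Formula A)) : Formula A → Prop
  | hyp {φ : Formula A} : φ ∈ X → Derives X φ
  | thm {φ : Formula A} : Prov φ → Derives X φ
  | mp {φ ψ : Formula A} : Derives X (φ.impl ψ) → Derives X φ → Derives X ψ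

section Helpers

variable {A : Type} [DecidableEq A]

open Formula

/- Basic tautologies -/
lemma taut_id (φ : Formula A) : Prov (φ.impl φ) := by
  apply Prov.taut; intro v hn hi; simp [hi]

lemma taut_K (φ ψ : Formula A) : Prov (φ.impl (ψ.impl φ)) := by
  apply Prov.taut; intro v hn hi
  simp only [hi]; cases v φ <;> cases v ψ <;> simp

lemma taut_S (φ ψ χ : Formula A) :
    Prov ((φ.impl (ψ.impl χ)).impl ((φ.impl ψ).impl (φ.impl χ))) := by
  apply Prov.taut; intro v hn hi
  simp only [hi]; cases v φ <;> cases v ψ <;> cases v χ <;> simp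

lemma taut_contra (φ ψ : Formula A) :
    Prov ((φ.impl ψ).impl ((ψ.neg).impl (φ.neg))) := by
  apply Prov.taut; intro v hn hi
  simp only [hi, hn]; cases v φ <;> cases v ψ <;> simp

lemma taut_trans (φ ψ χ : Formula A) :
    Prov ((φ.impl ψ).impl ((ψ.impl χ).impl (φ.impl χ))) := by
  apply Prov.taut; intro v hn hi
  simp only [hi]; cases v φ <;> cases v ψ <;> cases v χ <;> simp

lemma taut_orl (φ ψ : Formula A) : Prov (φ.impl (φ.or ψ)) := by
  apply Prov.taut; intro v hn hi
  simp only [Formula.or, hi, hn]; cases v φ <;> cases v ψ <;> simp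

lemma taut_andI (φ ψ : Formula A) : Prov (φ.impl (ψ.impl (φ.and ψ))) := by
  apply Prov.taut; intro v hn hi
  simp only [Formula.and, hi, hn]; cases v φ <;> cases v ψ <;> simp

lemma taut_negimp (φ ψ : Formula A) :
    Prov (((φ.neg).impl ψ).impl ((ψ.neg).impl φ)) := by
  apply Prov.taut; intro v hn hi
  simp only [hi, hn]; cases v φ <;> cases v ψ <;> simp

lemma taut_fbot (φ : Formula A) : Prov ((Formula.fbot (A := A)).impl φ) := by
  apply Prov.taut; intro v hn hi
  simp only [Formula.fbot, hi, hn]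
  cases v (Formula.var 0 : Formula A) <;> cases v φ <;> simp

lemma prov_trans {φ ψ χ : Formula A}
    (h1 : Prov (φ.impl ψ)) (h2 : Prov (ψ.impl χ)) : Prov (φ.impl χ) :=
  Prov.mp (Prov.mp (taut_trans φ ψ χ) h1) h2

/- Deduction theorem machinery -/
lemma Derives.deduction {X : Set (Formula A)} {φ ψ : Formula A}
    (h : Derives (insert ψ X) φ) : Derives X (ψ.impl φ) := by
  induction h with
  | hyp hmem =>
    rcases hmem with h | h
    · subst h; exact Derives.thm (taut_id _)
    · exact Derives.mp (Derives.thm (taut_K _ _)) (Derives.hyp h)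
  | thm hp => exact Derives.mp (Derives.thm (taut_K _ _)) (Derives.thm hp)
  | mp _ _ ih1 ih2 => exact Derives.mp (Derives.mp (Derives.thm (taut_S _ _ _)) ih1) ih2

lemma prov_of_derives_empty {φ : Formula A}
    (h : Derives (∅ : Set (Formula A)) φ) : Prov φ := by
  induction h with
  | hyp hmem => exact absurd hmem (Set.notMem_empty _)
  | thm hp => exact hp
  | mp _ _ ih1 ih2 => exact Prov.mp ih1 ih2

/- N̄ is monotone w.r.t. provable implication -/
lemma nbar_mono {φ ψ : Formula A} (h : Prov (φ.impl ψ)) :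
    Prov (φ.nbar.impl ψ.nbar) := by
  have h1 : Prov ((ψ.neg).impl (φ.neg)) := Prov.mp (taut_contra _ _) h
  have h2 : Prov ((Formula.N ψ.neg).impl (Formula.N φ.neg)) :=
    Prov.mp Prov.distr (Prov.nec h1)
  exact Prov.mp (taut_contra _ _) h2

/- K-style distribution for N̄ -/
lemma nbarK {φ ψ : Formula A} :
    Prov ((Formula.N (φ.impl ψ)).impl (φ.nbar.impl ψ.nbar)) := by
  apply prov_of_derives_empty
  apply Derives.deduction
  apply Derives.deduction
  -- hypotheses: φ.nbar (outer), N (φ.impl ψ)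
  have hN : Derives (insert φ.nbar (insert (Formula.N (φ.impl ψ)) (∅ : Set (Formula A))))
      (Formula.N (φ.impl ψ)) := Derives.hyp (by simp)
  have hnb : Derives (insert φ.nbar (insert (Formula.N (φ.impl ψ)) (∅ : Set (Formula A))))
      φ.nbar := Derives.hyp (by simp)
  have s1 : Derives _ (Formula.N ((ψ.neg).impl (φ.neg))) :=
    Derives.mp (Derives.thm (Prov.mp Prov.distr (Prov.nec (taut_contra φ ψ)))) hN
  have s2 : Derives _ ((Formula.N ψ.neg).impl (Formula.N φ.neg)) :=
    Derives.mp (Derives.thm Prov.distr) s1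
  have s3 : Derives _ (((Formula.N φ.neg).neg).impl ((Formula.N ψ.neg).neg)) :=
    Derives.mp (Derives.thm (taut_contra _ _)) s2
  exact Derives.mp s3 hnb

/- From N̄ B and φ, derive B -/
lemma prov_detach {s : ℝ} {C : Finset A} {φ : Formula A} (hs : 0 ≤ s) :
    Prov ((Formula.B s C φ).nbar.impl (φ.impl (Formula.B s C φ))) := by
  set b : Formula A := Formula.B s C φ with hb
  have f := Prov.fair (s := s) (C := C) (φ := φ) hs
  -- f : b → N (φ → b)
  have c1 : Prov (((Formula.N (φ.impl b)).neg).impl b.neg) :=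
    Prov.mp (taut_contra _ _) f
  have c2 : Prov ((Formula.N ((Formula.N (φ.impl b)).neg)).impl (Formula.N b.neg)) :=
    Prov.mp Prov.distr (Prov.nec c1)
  have c3 : Prov (((Formula.N (φ.impl b)).neg).impl (Formula.N b.neg)) :=
    prov_trans Prov.negIntro c2
  have c4 : Prov (((Formula.N b.neg).neg).impl (Formula.N (φ.impl b))) :=
    Prov.mp (taut_negimp _ _) c3
  exact prov_trans c4 Prov.truthN

/- The binary joint responsibility at the N̄ level -/
lemma nbar_joint {s t : ℝ} {C D : Finset A} {φ ψ : Formula A}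
    (hs : 0 ≤ s) (ht : 0 ≤ t) (hCD : Disjoint C D) :
    Prov ((Formula.B s C φ).nbar.impl ((Formula.B t D ψ).nbar.impl
      ((Formula.B (s + t) (C ∪ D) (φ.or ψ)).nbar))) := by
  apply prov_of_derives_empty
  set n1 : Formula A := (Formula.B s C φ).nbar with hn1
  set n2 : Formula A := (Formula.B t D ψ).nbar with hn2
  apply Derives.deduction (X := (∅ : Set (Formula A)))
  apply Derives.deduction
  set X2 : Set (Formula A) := insert n2 (insert n1 (∅ : Set (Formula A))) with hX2
  have d1 : Derives X2 n1 := Derives.hyp (by simp [hX2])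
  have d2 : Derives X2 n2 := Derives.hyp (by simp [hX2])
  -- N n1, N n2 via negative introspection (nbar χ = (N χ.neg).neg)
  have dN1 : Derives X2 (Formula.N n1) := Derives.mp (Derives.thm Prov.negIntro) d1
  have dN2 : Derives X2 (Formula.N n2) := Derives.mp (Derives.thm Prov.negIntro) d2
  -- N (n1 ∧ n2)
  have dconj : Derives X2 (Formula.N (n1.and n2)) := by
    have p1 : Prov ((Formula.N n1).impl (Formula.N (n2.impl (n1.and n2)))) :=
      Prov.mp Prov.distr (Prov.nec (taut_andI n1 n2))
    have e1 : Derives X2 (Formula.N (n2.impl (n1.and n2))) :=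
      Derives.mp (Derives.thm p1) dN1
    have e2 : Derives X2 ((Formula.N n2).impl (Formula.N (n1.and n2))) :=
      Derives.mp (Derives.thm Prov.distr) e1
    exact Derives.mp e2 dN2
  -- N ((φ ∨ ψ) → B₊)
  have J := Prov.joint (s := s) (t := t) (C := C) (D := D) (φ := φ) (ψ := ψ) hs ht hCD
  have dNimp : Derives X2 (Formula.N ((φ.or ψ).impl
      (Formula.B (s + t) (C ∪ D) (φ.or ψ)))) :=
    Derives.mp (Derives.mp (Derives.thm Prov.distr) (Derives.thm (Prov.nec J))) dconj
  -- N̄ (φ ∨ ψ) from n1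
  have dnborφψ : Derives X2 ((φ.or ψ).nbar) := by
    have p2 : Prov ((Formula.B s C φ).impl (φ.or ψ)) :=
      prov_trans (Prov.truthB hs) (taut_orl φ ψ)
    exact Derives.mp (Derives.thm (nbar_mono p2)) d1
  exact Derives.mp (Derives.mp (Derives.thm nbarK) dNimp) dnborφψ

/- Finset list helpers -/
lemma foldr_union_append (Ds : List (Finset A)) (E : Finset A) :
    Ds.foldr (· ∪ ·) E = Ds.foldr (· ∪ ·) ∅ ∪ E := by
  induction Ds with
  | nil => simp
  | cons d ds ih => simp [List.foldr_cons, ih, Finset.union_assoc]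

lemma disjoint_foldr {Ds : List (Finset A)} {E : Finset A}
    (h : ∀ D ∈ Ds, Disjoint D E) : Disjoint (Ds.foldr (· ∪ ·) ∅) E := by
  induction Ds with
  | nil => simp
  | cons d ds ih =>
    simp only [List.foldr_cons, Finset.disjoint_union_left]
    exact ⟨h d (by simp), ih (fun D hD => h D (by simp [hD]))⟩

lemma bigOr_concat {m : List (Formula A)} (hm : m ≠ []) (χ : Formula A) :
    bigOr (m ++ [χ]) = (bigOr m).or χ := by
  cases m with
  | nil => exact absurd rfl hm
  | cons a rs => simp [bigOr, List.foldl_append]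

/- Main induction: derive N̄ of the big blame formula -/
lemma nbar_big (X : Set (Formula A)) :
    ∀ l : List (ℝ × Finset A × Formula A), l ≠ [] →
    (∀ x ∈ l, 0 ≤ x.1) →
    (l.Pairwise fun x y => Disjoint x.2.1 y.2.1) →
    (∀ x ∈ l, (Formula.B x.1 x.2.1 x.2.2).nbar ∈ X) →
    Derives X ((Formula.B ((l.map fun x => x.1).sum)
        ((l.map fun x => x.2.1).foldr (· ∪ ·) ∅)
        (bigOr (l.map fun x => x.2.2))).nbar) := by
  intro l
  induction l using List.reverseRecOn with
  | nil => intro h; exact absurd rfl h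
  | append_singleton l x ih =>
    intro _ ht hdisj hX
    rcases eq_or_ne l [] with rfl | hl
    · -- singleton case
      simp only [List.nil_append, List.map_cons, List.map_nil, List.sum_cons,
        List.sum_nil, add_zero, List.foldr_cons, List.foldr_nil]
      have hx : (Formula.B x.1 x.2.1 x.2.2).nbar ∈ X := hX x (by simp)
      have hm : Prov ((Formula.B x.1 x.2.1 x.2.2).impl
          (Formula.B x.1 (x.2.1 ∪ ∅) x.2.2)) :=
        Prov.mono (ht x (by simp)) le_rfl Finset.subset_union_left
      have : bigOr ([x].map fun y => y.2.2) = x.2.2 := rfl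
      simpa [this, bigOr] using Derives.mp (Derives.thm (nbar_mono hm)) (Derives.hyp hx)
    · -- inductive step
      have ht' : ∀ y ∈ l, 0 ≤ y.1 := fun y hy => ht y (by simp [hy])
      have hdisj' : l.Pairwise fun a b => Disjoint a.2.1 b.2.1 :=
        (List.pairwise_append.mp hdisj).1
      have hX' : ∀ y ∈ l, (Formula.B y.1 y.2.1 y.2.2).nbar ∈ X :=
        fun y hy => hX y (by simp [hy])
      have dIH := ih hl ht' hdisj' hX'
      set S : ℝ := (l.map fun y => y.1).sum with hS
      set U : Finset A := ((l.map fun y => y.2.1).foldr (· ∪ ·) ∅) with hU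
      set Φ : Formula A := bigOr (l.map fun y => y.2.2) with hΦ
      have hS0 : 0 ≤ S := by
        apply List.sum_nonneg
        intro a ha
        rcases List.mem_map.mp ha with ⟨y, hy, rfl⟩
        exact ht' y hy
      have hx0 : 0 ≤ x.1 := ht x (by simp)
      have hDis : Disjoint U x.2.1 := by
        apply disjoint_foldr
        intro D hD
        rcases List.mem_map.mp hD with ⟨y, hy, rfl⟩
        exact (List.pairwise_append.mp hdisj).2.2 y hy x (by simp)
      have dx : Derives X ((Formula.B x.1 x.2.1 x.2.2).nbar) :=
        Derives.hyp (hX x (by simp))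
      have dres : Derives X ((Formula.B (S + x.1) (U ∪ x.2.1) (Φ.or x.2.2)).nbar) :=
        Derives.mp (Derives.mp (Derives.thm (nbar_joint hS0 hx0 hDis)) dIH) dx
      -- rewrite the goal to match
      have e1 : (((l ++ [x]).map fun y => y.1).sum) = S + x.1 := by
        simp [hS, List.sum_append]
      have e2 : (((l ++ [x]).map fun y => y.2.1).foldr (· ∪ ·) ∅) = U ∪ x.2.1 := by
        simp only [List.map_append, List.foldr_append, List.map_cons, List.map_nil,
          List.foldr_cons, List.foldr_nil]
        rw [foldr_union_append]
        simp [hU]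
      have e3 : bigOr ((l ++ [x]).map fun y => y.2.2) = Φ.or x.2.2 := by
        simp only [List.map_append, List.map_cons, List.map_nil]
        have : (l.map fun y => y.2.2) ≠ [] := by
          simpa using hl
        rw [bigOr_concat this]
      rw [e1, e2, e3]
      exact dres

end Helpers

/-- Generalized joint responsibility is derivable: for pairwise
disjoint coalitions `D₁,…,Dₙ`, reals `t₁,…,tₙ ≥ 0` and formulas `χ₁,…,χₙ`
(a list `l` of triples), the hypotheses `N̄ B^{tᵢ}_{Dᵢ} χᵢ` together with
`χ₁ ∨ ⋯ ∨ χₙ` derive `B^{t₁+⋯+tₙ}_{D₁∪⋯∪Dₙ}(χ₁ ∨ ⋯ ∨ χₙ)`. -/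

theorem generalized_joint_responsibility_derivable {A : Type} [DecidableEq A]
    (l : List (ℝ × Finset A × Formula A))
    (ht : ∀ x ∈ l, 0 ≤ x.1)
    (hdisj : l.Pairwise fun x y => Disjoint x.2.1 y.2.1) :
    Derives
      ({χ : Formula A | ∃ x ∈ l, χ = (Formula.B x.1 x.2.1 x.2.2).nbar} ∪
        {bigOr (l.map fun x => x.2.2)})
      (Formula.B ((l.map fun x => x.1).sum)
        ((l.map fun x => x.2.1).foldr (· ∪ ·) ∅)
        (bigOr (l.map fun x => x.2.2))) := by
  set X : Set (Formula A) :=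
    ({χ : Formula A | ∃ x ∈ l, χ = (Formula.B x.1 x.2.1 x.2.2).nbar} ∪
      {bigOr (l.map fun x => x.2.2)}) with hXdef
  have hdisjX : Derives X (bigOr (l.map fun x => x.2.2)) :=
    Derives.hyp (Or.inr rfl)
  rcases eq_or_ne l [] with rfl | hl
  · -- empty list: hypothesis is fbot, ex falso
    exact Derives.mp (Derives.thm (taut_fbot _)) hdisjX
  · have dnb := nbar_big X l hl ht hdisj
      (fun x hx => Or.inl ⟨x, hx, rfl⟩)
    have hS0 : 0 ≤ ((l.map fun x => x.1).sum) := by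
      apply List.sum_nonneg
      intro a ha
      rcases List.mem_map.mp ha with ⟨y, hy, rfl⟩
      exact ht y hy
    exact Derives.mp (Derives.mp (Derives.thm (prov_detach hS0)) dnb) hdisjX
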